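/- Lemma A.1 (explicit stationary distribution): Let {ω_k}_{k≥0} be the Markov chain on {0,…,L} with ω_0 = 0 and transition matrix P_{λ,L}, and let g_k = (g_k^{(1)}, g_k^{(2)}) ∈ G = ℤ_{2L} × ℤ_{2L} be defined by g_k^{(1)} = ω_{k−1} if ω_{k−1} ∈ {0,…,L−1}, g_k^{(1)} = 0 if ω_{k−1} = L, and g_k^{(2)} = ω_k. Then {g_k}_{k≥1} is a Markov chain on G, and there exists C > 0 depending on λ and L such that for all 1 ≤ k ≤ m and g' ∈ G, Σ_{g∈G} |ℙ(g_m = g | g_k = g') − π(g)| ≤ C(1 − (1−λ)^{L−1})^{m−k}, where π is the distribution on G given for g = (x,y) by: π(x,y) = (1−λ)^L/(1+(L−1)λ) if (x,y) = (0,L); = λ(1−λ)^{L−x}/(1+(L−1)λ) if 1 ≤ x < L and y = L; = λ(1−λ)^y/(1+(L−1)λ) if x = 0 and 0 ≤ y < L; = λ²(1−λ)^{y−x}/(1+(L−1)λ) if 1 ≤ x ≤ y < L; and = 0 otherwise. -/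

import Mathlib

/-!
Lemma A.1 (explicit stationary distribution): with `{ω_k}` the Markov chain on `{0,…,L}`
with `ω_0 = 0` and transition matrix `P_{λ,L}`, and `g_k = (g_k^{(1)}, g_k^{(2)})` defined
by `g_k^{(1)} = ω_{k−1}` if `ω_{k−1} < L`, `g_k^{(1)} = 0` if `ω_{k−1} = L`, and
`g_k^{(2)} = ω_k`, the sequence `{g_k}_{k≥1}` is a Markov chain on `G = ℤ_{2L} × ℤ_{2L}`,
and for some `C > 0` (depending on `λ` and `L`), for all `1 ≤ k ≤ m` and `g' ∈ G`,
`Σ_{g∈G} |ℙ(g_m = g | g_k = g') − π(g)| ≤ C (1 − (1−λ)^{L−1})^{m−k}`,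
with `π` given by the explicit formula of the lemma.
-/

open MeasureTheory ProbabilityTheory Filter Finset
open scoped ENNReal ProbabilityTheory

noncomputable section

namespace MTD1D

/-- The group `G = ℤ_{2L} × ℤ_{2L}` (regarded as a finite set of states). -/
abbrev G (L : ℕ) := ZMod (2*L) × ZMod (2*L)

/-- The transition matrix `P_{λ,L}` on the states `{0,…,L}`. -/
def Pmat (L : ℕ) (lam : ℝ) (i j : Fin (L+1)) : ℝ :=
  let i' : ℕ := if i.val = L then 0 else i.val
  if j.val = L then (1 - lam)^(L - i')
  else if i' ≤ j.val then (1 - lam)^(j.val - i') * lam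
  else 0

/-- First component of the group element: `ω_{k−1}` if `ω_{k−1} < L`, else `0`. -/
def comp1 (L : ℕ) (w : Fin (L+1)) : ZMod (2*L) :=
  if w.val < L then (w.val : ZMod (2*L)) else 0

/-- Second component of the group element: `ω_k`. -/
def comp2 (L : ℕ) (w : Fin (L+1)) : ZMod (2*L) := (w.val : ZMod (2*L))

/-- The group element `g_k` built from the auxiliary chain `W`, for `k ≥ 1`. -/
def gOfW {Ω : Type} (L : ℕ) (W : ℕ → Ω → Fin (L+1)) (k : ℕ) (ω : Ω) : G L :=
  (comp1 L (W (k-1) ω), comp2 L (W k ω))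

/-- The explicit stationary distribution `π` on `G` of Lemma A.1, written for
`g = (x,y)` in terms of `x = g^{(1)}.val` and `y = g^{(2)}.val`. -/
def piExplicit (L : ℕ) (lam : ℝ) (g : G L) : ℝ :=
  let x : ℕ := g.1.val
  let y : ℕ := g.2.val
  let D : ℝ := 1 + ((L:ℝ) - 1) * lam
  if x = 0 ∧ y = L then (1 - lam)^L / D
  else if 1 ≤ x ∧ x < L ∧ y = L then lam * (1 - lam)^(L - x) / D
  else if x = 0 ∧ y < L then lam * (1 - lam)^y / D
  else if 1 ≤ x ∧ x ≤ y ∧ y < L then lam^2 * (1 - lam)^(y - x) / D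
  else 0

/-- class of a state: `L ↦ 0`, else identity. -/
def cls (L : ℕ) (x : Fin (L+1)) : ℕ := if x.val = L then 0 else x.val

/-- row of the transition matrix as a function of the class. -/
def Prow (L : ℕ) (lam : ℝ) (t : ℕ) (j : Fin (L+1)) : ℝ :=
  if j.val = L then (1 - lam)^(L - t)
  else if t ≤ j.val then (1 - lam)^(j.val - t) * lam
  else 0

/-- lumped transition kernel on classes. -/
def Qm (L : ℕ) (lam : ℝ) (t t' : ℕ) : ℝ :=
  ∑ y : Fin (L+1), if cls L y = t' then Prow L lam t y else 0

/-- stationary distribution of the lumped chain. -/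
def sigmaV (L : ℕ) (lam : ℝ) (t : ℕ) : ℝ :=
  (if t = 0 then 1 else lam) / (1 + ((L:ℝ) - 1) * lam)

def lump (L : ℕ) (ρ : Fin (L+1) → ℝ) (t : ℕ) : ℝ :=
  ∑ x : Fin (L+1), if cls L x = t then ρ x else 0

def stepR (L : ℕ) (lam : ℝ) (τ : ℕ → ℝ) (t' : ℕ) : ℝ :=
  ∑ t ∈ range L, τ t * Qm L lam t t'

/-- n-step transition (prepend recursion). -/
def Pk (L : ℕ) (lam : ℝ) : ℕ → Fin (L+1) → Fin (L+1) → ℝ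
  | 0 => fun i j => if i = j then 1 else 0
  | n+1 => fun i j => ∑ w : Fin (L+1), Pmat L lam i w * Pk L lam n w j

section facts
variable {L : ℕ} {lam : ℝ} (hL : 0 < L) (h0 : 0 < lam) (h1 : lam < 1)

lemma cls_lt (x : Fin (L+1)) (hL : 0 < L) : cls L x < L := by
  unfold cls
  rcases eq_or_ne x.val L with h | h
  · simp [h, hL]
  · simp [h, lt_of_le_of_ne (Nat.lt_succ_iff.mp x.isLt) h]

lemma Pmat_eq_Prow (i j : Fin (L+1)) : Pmat L lam i j = Prow L lam (cls L i) j := rfl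

lemma Prow_nonneg (h0 : 0 < lam) (h1 : lam < 1) (t : ℕ) (j : Fin (L+1)) :
    0 ≤ Prow L lam t j := by
  unfold Prow
  have ha : (0:ℝ) ≤ 1 - lam := by linarith
  split_ifs <;> positivity

lemma Pmat_nonneg (h0 : 0 < lam) (h1 : lam < 1) (i j : Fin (L+1)) :
    0 ≤ Pmat L lam i j := by
  rw [Pmat_eq_Prow]; exact Prow_nonneg h0 h1 _ _

lemma geom_aux (h0 : 0 < lam) (s : ℕ) :
    lam * ∑ t ∈ range s, (1 - lam)^t = 1 - (1 - lam)^s := by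
  induction s with
  | zero => simp
  | succ n ih =>
    rw [Finset.sum_range_succ, mul_add, ih, pow_succ]
    ring

lemma Prow_rowsum (h0 : 0 < lam) (t : ℕ) (ht : t < L) :
    ∑ j : Fin (L+1), Prow L lam t j = 1 := by
  rw [Fin.sum_univ_castSucc]
  have hlast : Prow L lam t (Fin.last L) = (1 - lam)^(L - t) := by
    unfold Prow; simp
  have hcast : ∀ j : Fin L, Prow L lam t (Fin.castSucc j) =
      if t ≤ j.val then (1 - lam)^(j.val - t) * lam else 0 := by
    intro j
    unfold Prow
    have : (Fin.castSucc j).val ≠ L := by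
      simp [Fin.coe_castSucc]; omega
    simp only [this, if_neg this]
    rfl
  rw [hlast]
  have h2 : ∑ j : Fin L, Prow L lam t (Fin.castSucc j)
      = ∑ j ∈ range L, (if t ≤ j then (1 - lam)^(j - t) * lam else 0) := by
    simp only [hcast]
    exact Fin.sum_univ_eq_sum_range (fun j => if t ≤ j then (1 - lam)^(j - t) * lam else 0) L
  rw [h2]
  have h3 : ∑ j ∈ range L, (if t ≤ j then (1 - lam)^(j - t) * lam else 0)
      = ∑ j ∈ Finset.Ico t L, (1 - lam)^(j - t) * lam := by
    rw [Finset.range_eq_Ico, ← Finset.sum_Ico_consecutive _ (Nat.zero_le t) (le_of_lt ht)]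
    rw [Finset.sum_ite_of_false, Finset.sum_ite_of_true]
    · simp
    · intro j hj; exact (Finset.mem_Ico.mp hj).1
    · intro j hj; rw [Finset.mem_Ico] at hj; omega
  rw [h3, Finset.sum_Ico_eq_sum_range]
  simp only [Nat.add_sub_cancel_left]
  have h4 : ∑ j ∈ range (L - t), (1 - lam)^j * lam
      = lam * ∑ j ∈ range (L - t), (1 - lam)^j := by
    rw [Finset.mul_sum]; apply Finset.sum_congr rfl; intros; ring
  rw [h4, geom_aux h0]
  ring

lemma sum_fiber (f : Fin (L+1) → ℝ) (hL : 0 < L) :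
    ∑ t ∈ range L, ∑ x : Fin (L+1), (if cls L x = t then f x else 0)
      = ∑ x : Fin (L+1), f x := by
  rw [Finset.sum_comm]
  apply Finset.sum_congr rfl
  intro x _
  rw [Finset.sum_ite_eq]
  simp [Finset.mem_range.mpr (cls_lt x hL)]

lemma Qm_nonneg (h0 : 0 < lam) (h1 : lam < 1) (t t' : ℕ) : 0 ≤ Qm L lam t t' := by
  unfold Qm
  apply Finset.sum_nonneg
  intro y _
  split_ifs
  · exact Prow_nonneg h0 h1 _ _
  · exact le_refl 0

lemma Qm_rowsum (hL : 0 < L) (h0 : 0 < lam) (t : ℕ) (ht : t < L) :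
    ∑ t' ∈ range L, Qm L lam t t' = 1 := by
  unfold Qm
  rw [sum_fiber _ hL]
  exact Prow_rowsum h0 t ht

lemma Qm_col0 (hL : 0 < L) (h0 : 0 < lam) (h1 : lam < 1) (t : ℕ) (ht : t < L) :
    (1 - lam)^(L-1) ≤ Qm L lam t 0 := by
  have ha : (0:ℝ) ≤ 1 - lam := by linarith
  have hb : 1 - lam ≤ 1 := by linarith
  have hzero : (⟨0, Nat.succ_pos L⟩ : Fin (L+1)).val = 0 := rfl
  have hLmem : ((⟨L, Nat.lt_succ_self L⟩ : Fin (L+1))).val = L := rfl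
  have hclsL : cls L (⟨L, Nat.lt_succ_self L⟩ : Fin (L+1)) = 0 := by simp [cls]
  have hcls0 : cls L (⟨0, Nat.succ_pos L⟩ : Fin (L+1)) = 0 := by
    unfold cls; split_ifs <;> rfl
  have hProwL : Prow L lam t (⟨L, Nat.lt_succ_self L⟩ : Fin (L+1)) = (1-lam)^(L-t) := by
    simp [Prow]
  rcases Nat.eq_zero_or_pos t with rfl | htpos
  · -- t = 0 : bound by the two terms at 0 and L
    have hProw0 : Prow L lam 0 (⟨0, Nat.succ_pos L⟩ : Fin (L+1)) = lam := by
      unfold Prow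
      have : (⟨0, Nat.succ_pos L⟩ : Fin (L+1)).val ≠ L := by simp; omega
      rw [if_neg this, if_pos (Nat.zero_le _)]
      simp
    have hsub : ({⟨0, Nat.succ_pos L⟩, ⟨L, Nat.lt_succ_self L⟩} : Finset (Fin (L+1)))
        ⊆ Finset.univ := Finset.subset_univ _
    have hne : (⟨0, Nat.succ_pos L⟩ : Fin (L+1)) ≠ ⟨L, Nat.lt_succ_self L⟩ := by
      intro h
      have := congrArg Fin.val h
      simp at this; omega
    have h2 : ∑ y ∈ ({⟨0, Nat.succ_pos L⟩, ⟨L, Nat.lt_succ_self L⟩} : Finset (Fin (L+1))),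
        (if cls L y = 0 then Prow L lam 0 y else 0) ≤ Qm L lam 0 0 := by
      apply Finset.sum_le_sum_of_subset_of_nonneg hsub
      intro y _ _
      split_ifs
      · exact Prow_nonneg h0 h1 _ _
      · exact le_refl 0
    rw [Finset.sum_pair hne] at h2
    rw [if_pos hcls0, if_pos hclsL, hProw0, hProwL] at h2
    refine le_trans ?_ h2
    have : (1-lam)^(L-1) = lam * (1-lam)^(L-1) + (1-lam)^(L-1+1) := by
      rw [pow_succ]; ring
    rw [this]
    have hLL : L - 1 + 1 = L := by omega
    rw [hLL]
    have hmm : lam * (1-lam)^(L-1) ≤ lam := by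
      calc lam * (1-lam)^(L-1) ≤ lam * 1 :=
            mul_le_mul_of_nonneg_left (pow_le_one₀ ha hb) (le_of_lt h0)
        _ = lam := mul_one lam
    simp only [Nat.sub_zero]
    linarith
  · -- t ≥ 1 : bound by the term at L
    have h2 : Prow L lam t (⟨L, Nat.lt_succ_self L⟩ : Fin (L+1)) ≤ Qm L lam t 0 := by
      have := Finset.single_le_sum (f := fun y =>
        (if cls L y = 0 then Prow L lam t y else 0))
        (fun y _ => by split_ifs; exacts [Prow_nonneg h0 h1 _ _, le_refl 0])
        (Finset.mem_univ (⟨L, Nat.lt_succ_self L⟩ : Fin (L+1)))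
      simpa [Qm, hclsL] using this
    refine le_trans ?_ h2
    rw [hProwL]
    exact pow_le_pow_of_le_one ha hb (by omega)

lemma Dpos (hL : 0 < L) (h0 : 0 < lam) : (0:ℝ) < 1 + ((L:ℝ) - 1) * lam := by
  have : (1:ℝ) ≤ (L:ℝ) := by exact_mod_cast hL
  nlinarith

lemma Qm_eq_pos (t t' : ℕ) (ht'0 : 0 < t') (ht'L : t' < L) :
    Qm L lam t t' = if t ≤ t' then (1 - lam)^(t' - t) * lam else 0 := by
  unfold Qm
  have ht'L1 : t' < L + 1 := by omega
  rw [Finset.sum_eq_single (⟨t', ht'L1⟩ : Fin (L+1))]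
  · have hc : cls L (⟨t', ht'L1⟩ : Fin (L+1)) = t' := by
      unfold cls; simp; omega
    rw [if_pos hc]
    unfold Prow
    have : (⟨t', ht'L1⟩ : Fin (L+1)).val ≠ L := by simp; omega
    rw [if_neg this]
  · intro y _ hy
    apply if_neg
    intro hc
    apply hy
    have hyval : y.val = t' := by
      unfold cls at hc
      split_ifs at hc with h
      · omega
      · exact hc
    exact Fin.ext hyval
  · intro h; exact absurd (Finset.mem_univ _) h

lemma Qm_eq_zero (hL : 0 < L) (t : ℕ) (ht : t < L) :
    Qm L lam t 0 = (if t = 0 then lam else 0) + (1 - lam)^(L - t) := by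
  unfold Qm
  have hne : (⟨0, Nat.succ_pos L⟩ : Fin (L+1)) ≠ ⟨L, Nat.lt_succ_self L⟩ := by
    intro h; have := congrArg Fin.val h; simp at this; omega
  have hsub : ({⟨0, Nat.succ_pos L⟩, ⟨L, Nat.lt_succ_self L⟩} : Finset (Fin (L+1)))
      ⊆ Finset.univ := Finset.subset_univ _
  rw [← Finset.sum_subset hsub]
  · rw [Finset.sum_pair hne]
    have hcls0 : cls L (⟨0, Nat.succ_pos L⟩ : Fin (L+1)) = 0 := by
      unfold cls; split_ifs <;> rfl
    have hclsL : cls L (⟨L, Nat.lt_succ_self L⟩ : Fin (L+1)) = 0 := by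
      unfold cls; simp
    rw [if_pos hcls0, if_pos hclsL]
    have h1 : Prow L lam t (⟨L, Nat.lt_succ_self L⟩ : Fin (L+1)) = (1-lam)^(L-t) := by
      unfold Prow; simp
    have h2 : Prow L lam t (⟨0, Nat.succ_pos L⟩ : Fin (L+1)) = if t = 0 then lam else 0 := by
      unfold Prow
      have hv : (⟨0, Nat.succ_pos L⟩ : Fin (L+1)).val = 0 := rfl
      rw [hv, if_neg (by omega)]
      rcases Nat.eq_zero_or_pos t with rfl | htp
      · simp
      · rw [if_neg (by omega), if_neg (by omega)]
    rw [h1, h2]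
  · intro y _ hy
    apply if_neg
    intro hc
    apply hy
    simp only [Finset.mem_insert, Finset.mem_singleton]
    unfold cls at hc
    split_ifs at hc with h
    · right; exact Fin.ext h
    · left; exact Fin.ext hc

lemma sigma_stationary (hL : 0 < L) (h0 : 0 < lam) (h1 : lam < 1) (t' : ℕ) (ht' : t' < L) :
    stepR L lam (sigmaV L lam) t' = sigmaV L lam t' := by
  have hD := Dpos (L := L) hL h0
  set D : ℝ := 1 + ((L:ℝ) - 1) * lam with hDdef
  have hDne : D ≠ 0 := ne_of_gt hD
  rcases Nat.eq_zero_or_pos t' with rfl | ht'pos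
  · -- t' = 0
    unfold stepR
    have hQ : ∀ t ∈ range L, sigmaV L lam t * Qm L lam t 0
        = sigmaV L lam t * ((if t = 0 then lam else 0) + (1 - lam)^(L - t)) := by
      intro t htm
      rw [Qm_eq_zero hL t (Finset.mem_range.mp htm)]
    rw [Finset.sum_congr rfl hQ]
    have hsplit : ∀ t, sigmaV L lam t * ((if t = 0 then lam else 0) + (1 - lam)^(L - t))
        = (if t = 0 then lam/D else 0) + sigmaV L lam t * (1 - lam)^(L - t) := by
      intro t
      rcases eq_or_ne t 0 with rfl | ht0
      · simp [sigmaV]; ring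
      · simp [ht0]
    simp only [hsplit]
    rw [Finset.sum_add_distrib]
    have hfirst : ∑ t ∈ range L, (if t = 0 then lam/D else 0) = lam/D := by
      rw [Finset.sum_ite_eq' (range L) 0 (fun _ => lam/D)]
      simp [Finset.mem_range.mpr hL]
    rw [hfirst]
    have hL1 : 1 ≤ L := hL
    have hS : lam * ∑ t ∈ Finset.Ico 1 L, (1 - lam)^(L - t)
        = (1 - lam) - (1 - lam)^L := by
      have hre : ∑ t ∈ Finset.Ico 1 L, (1 - lam)^(L - t)
          = ∑ s ∈ range (L-1), (1 - lam)^(L - 1 - 1 - s + 1) := by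
        rw [Finset.sum_Ico_eq_sum_range]
        apply Finset.sum_congr rfl
        intro s hs
        rw [Finset.mem_range] at hs
        congr 1
        omega
      rw [hre, Finset.sum_range_reflect (fun j => (1 - lam)^(j+1)) (L-1)]
      have hmul : ∑ s ∈ range (L-1), (1 - lam)^(s+1)
          = (1 - lam) * ∑ s ∈ range (L-1), (1 - lam)^s := by
        rw [Finset.mul_sum]
        apply Finset.sum_congr rfl
        intro s _
        rw [pow_succ]; ring
      rw [hmul, show lam * ((1 - lam) * ∑ s ∈ range (L-1), (1 - lam)^s)
          = (1 - lam) * (lam * ∑ s ∈ range (L-1), (1 - lam)^s) from by ring,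
        geom_aux h0 (L-1)]
      have hpow : (1 - lam) * (1 - lam)^(L-1) = (1 - lam)^L := by
        rw [← pow_succ']
        congr 1
        omega
      nlinarith [hpow]
    have hsecond : ∑ t ∈ range L, sigmaV L lam t * (1 - lam)^(L - t)
        = (1/D) * (1-lam)^L + (1/D) * ((1-lam) - (1-lam)^L) := by
      rw [Finset.range_eq_Ico, ← Finset.sum_Ico_consecutive _ (Nat.zero_le 1) hL1]
      have h00 : ∑ t ∈ Finset.Ico 0 1, sigmaV L lam t * (1 - lam)^(L - t)
          = (1/D) * (1-lam)^L := by
        simp [sigmaV, hDdef]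
      have h11 : ∑ t ∈ Finset.Ico 1 L, sigmaV L lam t * (1 - lam)^(L - t)
          = (lam/D) * ∑ t ∈ Finset.Ico 1 L, (1 - lam)^(L - t) := by
        rw [Finset.mul_sum]
        apply Finset.sum_congr rfl
        intro t htm
        rw [Finset.mem_Ico] at htm
        have ht0 : t ≠ 0 := by omega
        simp only [sigmaV, if_neg ht0]
        try ring
      rw [h00, h11, ← hS]
      try ring
    rw [hsecond]
    simp only [sigmaV, if_pos rfl]
    field_simp
    try ring
    rw [if_pos trivial, mul_one, (show (1 - lam + lam * (L:ℝ)) = D by rw [hDdef]; ring), mul_inv_cancel₀ hDne]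
  · -- t' ≥ 1
    unfold stepR
    have hQ : ∀ t ∈ range L, sigmaV L lam t * Qm L lam t t'
        = sigmaV L lam t * (if t ≤ t' then (1 - lam)^(t' - t) * lam else 0) := by
      intro t _
      rw [Qm_eq_pos t t' ht'pos ht']
    rw [Finset.sum_congr rfl hQ]
    have htrunc : ∑ t ∈ range L, sigmaV L lam t * (if t ≤ t' then (1 - lam)^(t' - t) * lam else 0)
        = ∑ t ∈ range (t'+1), sigmaV L lam t * ((1 - lam)^(t' - t) * lam) := by
      rw [Finset.range_eq_Ico,
        ← Finset.sum_Ico_consecutive _ (Nat.zero_le (t'+1)) (show t'+1 ≤ L by omega)]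
      have hz : ∑ t ∈ Finset.Ico (t'+1) L, sigmaV L lam t *
          (if t ≤ t' then (1 - lam)^(t' - t) * lam else 0) = 0 := by
        apply Finset.sum_eq_zero
        intro t htm
        rw [Finset.mem_Ico] at htm
        rw [if_neg (by omega)]
        ring
      rw [hz, add_zero]
      rw [Finset.range_eq_Ico]
      apply Finset.sum_congr rfl
      intro t htm
      rw [Finset.mem_Ico] at htm
      rw [if_pos (by omega)]
    rw [htrunc]
    have hS : lam * ∑ t ∈ Finset.Ico 1 (t'+1), (1 - lam)^(t' - t)
        = 1 - (1 - lam)^t' := by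
      have hre : ∑ t ∈ Finset.Ico 1 (t'+1), (1 - lam)^(t' - t)
          = ∑ s ∈ range t', (1 - lam)^(t' - 1 - s) := by
        rw [Finset.sum_Ico_eq_sum_range]
        have : t' + 1 - 1 = t' := by omega
        rw [this]
        apply Finset.sum_congr rfl
        intro s hs
        rw [Finset.mem_range] at hs
        congr 1
        omega
      rw [hre, Finset.sum_range_reflect (fun j => (1 - lam)^j) t']
      exact geom_aux h0 t'
    rw [Finset.range_eq_Ico,
      ← Finset.sum_Ico_consecutive _ (Nat.zero_le 1) (show 1 ≤ t'+1 by omega)]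
    have h00 : ∑ t ∈ Finset.Ico 0 1, sigmaV L lam t * ((1 - lam)^(t' - t) * lam)
        = (1/D) * ((1-lam)^(t') * lam) := by
      simp [sigmaV, hDdef]
    have h11 : ∑ t ∈ Finset.Ico 1 (t'+1), sigmaV L lam t * ((1 - lam)^(t' - t) * lam)
        = (lam/D) * lam * ∑ t ∈ Finset.Ico 1 (t'+1), (1 - lam)^(t' - t) := by
      rw [Finset.mul_sum]
      apply Finset.sum_congr rfl
      intro t htm
      rw [Finset.mem_Ico] at htm
      have ht0 : t ≠ 0 := by omega
      simp only [sigmaV, if_neg ht0]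
      ring
    rw [h00, h11, show (lam/D) * lam * ∑ t ∈ Finset.Ico 1 (t'+1), (1 - lam)^(t' - t)
        = (1/D) * (lam * (lam * ∑ t ∈ Finset.Ico 1 (t'+1), (1 - lam)^(t' - t))) from by ring]
    rw [hS]
    simp only [sigmaV, if_neg (show t' ≠ 0 by omega)]
    field_simp
    ring
    rw [(show (1 - lam + lam * (L:ℝ)) = D by rw [hDdef]; ring), mul_inv_cancel₀ hDne]

lemma Pmat_rowsum (hL : 0 < L) (h0 : 0 < lam) (i : Fin (L+1)) :
    ∑ j : Fin (L+1), Pmat L lam i j = 1 := by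
  simp only [Pmat_eq_Prow]
  exact Prow_rowsum h0 _ (cls_lt i hL)

lemma Pk_nonneg (h0 : 0 < lam) (h1 : lam < 1) (n : ℕ) (i j : Fin (L+1)) :
    0 ≤ Pk L lam n i j := by
  induction n generalizing i j with
  | zero => unfold Pk; split_ifs <;> norm_num
  | succ n ih =>
    unfold Pk
    apply Finset.sum_nonneg
    intro w _
    exact mul_nonneg (Pmat_nonneg h0 h1 _ _) (ih _ _)

lemma Pk_rowsum (hL : 0 < L) (h0 : 0 < lam) (n : ℕ) (i : Fin (L+1)) :
    ∑ j : Fin (L+1), Pk L lam n i j = 1 := by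
  induction n generalizing i with
  | zero =>
    unfold Pk
    simp
  | succ n ih =>
    unfold Pk
    rw [Finset.sum_comm]
    have : ∀ w : Fin (L+1), ∑ j : Fin (L+1), Pmat L lam i w * Pk L lam n w j
        = Pmat L lam i w := by
      intro w
      rw [← Finset.mul_sum, ih w, mul_one]
    rw [Finset.sum_congr rfl (fun w _ => this w)]
    exact Pmat_rowsum hL h0 i

lemma Pk_succ_right (n : ℕ) (i j : Fin (L+1)) :
    Pk L lam (n+1) i j = ∑ w : Fin (L+1), Pk L lam n i w * Pmat L lam w j := by
  induction n generalizing i j with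
  | zero =>
    show ∑ w : Fin (L+1), Pmat L lam i w * Pk L lam 0 w j = _
    unfold Pk
    simp
  | succ n ih =>
    show ∑ w : Fin (L+1), Pmat L lam i w * Pk L lam (n+1) w j = _
    have h1 : ∀ w : Fin (L+1), Pmat L lam i w * Pk L lam (n+1) w j
        = ∑ u : Fin (L+1), Pmat L lam i w * (Pk L lam n w u * Pmat L lam u j) := by
      intro w
      rw [ih w j, Finset.mul_sum]
    rw [Finset.sum_congr rfl (fun w _ => h1 w)]
    rw [Finset.sum_comm]
    show _ = ∑ u : Fin (L+1), (∑ w : Fin (L+1), Pmat L lam i w * Pk L lam n w u) * Pmat L lam u j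
    apply Finset.sum_congr rfl
    intro u _
    rw [Finset.sum_mul]
    apply Finset.sum_congr rfl
    intro w _
    ring

lemma lump_nonneg (ρ : Fin (L+1) → ℝ) (hρ : ∀ x, 0 ≤ ρ x) (t : ℕ) :
    0 ≤ lump L ρ t := by
  apply Finset.sum_nonneg
  intro x _
  split_ifs
  · exact hρ x
  · exact le_refl 0

lemma lump_sum (hL : 0 < L) (ρ : Fin (L+1) → ℝ) :
    ∑ t ∈ range L, lump L ρ t = ∑ x : Fin (L+1), ρ x := sum_fiber ρ hL

lemma lump_step (hL : 0 < L) (ρ : Fin (L+1) → ℝ) (t' : ℕ) :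
    lump L (fun j => ∑ w : Fin (L+1), ρ w * Pmat L lam w j) t'
      = stepR L lam (lump L ρ) t' := by
  unfold lump stepR Qm
  have l1 : ∀ x : Fin (L+1), (if cls L x = t' then ∑ w : Fin (L+1), ρ w * Pmat L lam w x else 0)
      = ∑ w : Fin (L+1), (if cls L x = t' then ρ w * Pmat L lam w x else 0) := by
    intro x
    split_ifs with h
    · rfl
    · rw [Finset.sum_const_zero]
  have l2 : ∀ w : Fin (L+1), ∑ x : Fin (L+1), (if cls L x = t' then ρ w * Pmat L lam w x else 0)
      = ρ w * ∑ x : Fin (L+1), (if cls L x = t' then Pmat L lam w x else 0) := by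
    intro w
    rw [Finset.mul_sum]
    apply Finset.sum_congr rfl
    intro x _
    rw [mul_ite, mul_zero]
  have lhs : ∑ x : Fin (L+1), (if cls L x = t' then ∑ w : Fin (L+1), ρ w * Pmat L lam w x else 0)
      = ∑ w : Fin (L+1), ρ w * ∑ x : Fin (L+1), (if cls L x = t' then Pmat L lam w x else 0) := by
    rw [Finset.sum_congr rfl (fun x _ => l1 x), Finset.sum_comm]
    exact Finset.sum_congr rfl (fun w _ => l2 w)
  rw [lhs]
  have hmid : ∀ w : Fin (L+1), ρ w * ∑ x : Fin (L+1), (if cls L x = t' then Pmat L lam w x else 0)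
      = ρ w * Qm L lam (cls L w) t' := by
    intro w
    congr 1
  rw [Finset.sum_congr rfl (fun w _ => hmid w)]
  rw [← sum_fiber (fun w => ρ w * Qm L lam (cls L w) t') hL]
  apply Finset.sum_congr rfl
  intro t ht
  have : ∑ x : Fin (L+1), (if cls L x = t then ρ x * Qm L lam (cls L x) t' else 0)
      = ∑ x : Fin (L+1), (if cls L x = t then ρ x * Qm L lam t t' else 0) := by
    apply Finset.sum_congr rfl
    intro x _
    by_cases h : cls L x = t
    · rw [if_pos h, if_pos h, h]
    · rw [if_neg h, if_neg h]
  rw [this]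
  unfold Qm
  rw [Finset.sum_mul]
  apply Finset.sum_congr rfl
  intro x _
  rw [ite_mul, zero_mul]

lemma sigmaV_nonneg (hL : 0 < L) (h0 : 0 < lam) (t : ℕ) : 0 ≤ sigmaV L lam t := by
  unfold sigmaV
  have := Dpos (L := L) hL h0
  split_ifs <;> positivity

lemma sigmaV_sum (hL : 0 < L) (h0 : 0 < lam) :
    ∑ t ∈ range L, sigmaV L lam t = 1 := by
  have hD := Dpos (L := L) hL h0
  rw [Finset.range_eq_Ico, ← Finset.sum_Ico_consecutive _ (Nat.zero_le 1) hL]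
  have h00 : ∑ t ∈ Finset.Ico 0 1, sigmaV L lam t = 1 / (1 + ((L:ℝ) - 1) * lam) := by
    simp [sigmaV]
  have h11 : ∑ t ∈ Finset.Ico 1 L, sigmaV L lam t
      = ((L:ℝ) - 1) * (lam / (1 + ((L:ℝ) - 1) * lam)) := by
    have e0 : ∀ t ∈ Finset.Ico 1 L, sigmaV L lam t = lam / (1 + ((L:ℝ) - 1) * lam) := by
      intro t ht
      rw [Finset.mem_Ico] at ht
      simp [sigmaV, show t ≠ 0 by omega]
    have e1 : ∑ t ∈ Finset.Ico 1 L, sigmaV L lam t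
        = ∑ _t ∈ Finset.Ico 1 L, lam / (1 + ((L:ℝ) - 1) * lam) := Finset.sum_congr rfl e0
    rw [e1, Finset.sum_const, Nat.card_Ico]
    have e2 : ((L - 1 : ℕ) : ℝ) = (L:ℝ) - 1 := by
      have : (1:ℕ) ≤ L := hL
      push_cast [this]
      ring
    rw [nsmul_eq_mul, e2]
  rw [h00, h11]
  field_simp

lemma contraction (hL : 0 < L) (h0 : 0 < lam) (h1 : lam < 1)
    (τ : ℕ → ℝ) (hsum : ∑ t ∈ range L, τ t = 0) :
    ∑ t' ∈ range L, |stepR L lam τ t'| ≤ (1 - (1-lam)^(L-1)) * ∑ t ∈ range L, |τ t| := by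
  set ε : ℝ := (1-lam)^(L-1) with hεdef
  have ha : (0:ℝ) ≤ 1 - lam := by linarith
  have hb : 1 - lam ≤ 1 := by linarith
  have hε0 : 0 ≤ ε := pow_nonneg ha _
  have hε1 : ε ≤ 1 := pow_le_one₀ ha hb
  have hQc : ∀ t t', t ∈ range L → 0 ≤ Qm L lam t t' - (if t' = 0 then ε else 0) := by
    intro t t' ht
    rw [Finset.mem_range] at ht
    by_cases h : t' = 0
    · rw [if_pos h, h]
      have := Qm_col0 hL h0 h1 t ht
      linarith
    · rw [if_neg h, sub_zero]
      exact Qm_nonneg h0 h1 t t'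
  have hkey : ∀ t', |stepR L lam τ t'|
      ≤ ∑ t ∈ range L, |τ t| * (Qm L lam t t' - (if t' = 0 then ε else 0)) := by
    intro t'
    have hrw : stepR L lam τ t'
        = ∑ t ∈ range L, τ t * (Qm L lam t t' - (if t' = 0 then ε else 0)) := by
      unfold stepR
      have : ∑ t ∈ range L, τ t * (Qm L lam t t' - (if t' = 0 then ε else 0))
          = ∑ t ∈ range L, τ t * Qm L lam t t'
            - (if t' = 0 then ε else 0) * ∑ t ∈ range L, τ t := by
        rw [Finset.mul_sum, ← Finset.sum_sub_distrib]
        apply Finset.sum_congr rfl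
        intro t _
        ring
      rw [this, hsum, mul_zero, sub_zero]
    rw [hrw]
    refine (Finset.abs_sum_le_sum_abs _ _).trans ?_
    apply Finset.sum_le_sum
    intro t ht
    rw [abs_mul, abs_of_nonneg (hQc t t' ht)]
  calc ∑ t' ∈ range L, |stepR L lam τ t'|
      ≤ ∑ t' ∈ range L, ∑ t ∈ range L, |τ t| * (Qm L lam t t' - (if t' = 0 then ε else 0)) :=
        Finset.sum_le_sum (fun t' _ => hkey t')
    _ = ∑ t ∈ range L, |τ t| * (∑ t' ∈ range L, (Qm L lam t t' - (if t' = 0 then ε else 0))) := by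
        rw [Finset.sum_comm]
        apply Finset.sum_congr rfl
        intro t _
        rw [Finset.mul_sum]
    _ = ∑ t ∈ range L, |τ t| * (1 - ε) := by
        apply Finset.sum_congr rfl
        intro t ht
        rw [Finset.mem_range] at ht
        congr 1
        rw [Finset.sum_sub_distrib, Qm_rowsum hL h0 t ht]
        congr 1
        rw [Finset.sum_ite_eq' (range L) 0 (fun _ => ε)]
        simp [Finset.mem_range.mpr hL]
    _ = (1 - ε) * ∑ t ∈ range L, |τ t| := by
        rw [Finset.mul_sum]
        apply Finset.sum_congr rfl
        intro t _
        ring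

lemma stepR_sub (τ τ' : ℕ → ℝ) (t' : ℕ) :
    stepR L lam (fun u => τ u - τ' u) t' = stepR L lam τ t' - stepR L lam τ' t' := by
  unfold stepR
  rw [← Finset.sum_sub_distrib]
  apply Finset.sum_congr rfl
  intro t _
  ring

lemma lump_Pk_sum (hL : 0 < L) (h0 : 0 < lam) (n : ℕ) (v₀ : Fin (L+1)) :
    ∑ t ∈ range L, lump L (Pk L lam n v₀) t = 1 := by
  rw [lump_sum hL]
  exact Pk_rowsum hL h0 n v₀

lemma iterate_bound (hL : 0 < L) (h0 : 0 < lam) (h1 : lam < 1) (v₀ : Fin (L+1)) (n : ℕ) :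
    ∑ t ∈ range L, |lump L (Pk L lam n v₀) t - sigmaV L lam t|
      ≤ (1 - (1-lam)^(L-1))^n
        * ∑ t ∈ range L, |lump L (Pk L lam 0 v₀) t - sigmaV L lam t| := by
  have ha : (0:ℝ) ≤ 1 - lam := by linarith
  have hb : 1 - lam ≤ 1 := by linarith
  have hr0 : 0 ≤ 1 - (1-lam)^(L-1) := by
    have := pow_le_one₀ ha hb (n := L-1)
    linarith
  induction n with
  | zero => simp
  | succ n ih =>
    have hstep : ∀ t' ∈ range L,
        lump L (Pk L lam (n+1) v₀) t' - sigmaV L lam t'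
          = stepR L lam (fun u => lump L (Pk L lam n v₀) u - sigmaV L lam u) t' := by
      intro t' ht'
      rw [Finset.mem_range] at ht'
      rw [stepR_sub, ← sigma_stationary hL h0 h1 t' ht']
      congr 1
      have hfun : Pk L lam (n+1) v₀ = fun j => ∑ w : Fin (L+1), Pk L lam n v₀ w * Pmat L lam w j := by
        funext j
        exact Pk_succ_right n v₀ j
      rw [hfun, lump_step hL]
    have e1 : ∑ t' ∈ range L, |lump L (Pk L lam (n+1) v₀) t' - sigmaV L lam t'|
        = ∑ t' ∈ range L,
            |stepR L lam (fun u => lump L (Pk L lam n v₀) u - sigmaV L lam u) t'| := by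
      apply Finset.sum_congr rfl
      intro t' ht'
      rw [hstep t' ht']
    rw [e1]
    have hzero : ∑ t ∈ range L, (lump L (Pk L lam n v₀) t - sigmaV L lam t) = 0 := by
      rw [Finset.sum_sub_distrib, lump_Pk_sum hL h0, sigmaV_sum hL h0]
      ring
    have hcon := contraction hL h0 h1 (fun u => lump L (Pk L lam n v₀) u - sigmaV L lam u) hzero
    refine hcon.trans ?_
    rw [pow_succ, mul_comm ((1 - (1-lam)^(L-1))^n) (1 - (1-lam)^(L-1)), mul_assoc]
    exact mul_le_mul_of_nonneg_left ih hr0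

lemma base_le_two (hL : 0 < L) (h0 : 0 < lam) (h1 : lam < 1) (v₀ : Fin (L+1)) :
    ∑ t ∈ range L, |lump L (Pk L lam 0 v₀) t - sigmaV L lam t| ≤ 2 := by
  have h2 : ∀ t ∈ range L, |lump L (Pk L lam 0 v₀) t - sigmaV L lam t|
      ≤ lump L (Pk L lam 0 v₀) t + sigmaV L lam t := by
    intro t _
    have hlumpn := lump_nonneg (Pk L lam 0 v₀) (fun x => Pk_nonneg h0 h1 0 v₀ x) t
    have hsn := sigmaV_nonneg hL h0 t
    rw [abs_sub_le_iff]
    constructor <;> linarith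
  refine (Finset.sum_le_sum h2).trans ?_
  rw [Finset.sum_add_distrib, lump_Pk_sum hL h0, sigmaV_sum hL h0]
  norm_num

lemma base_eq_zero_L1 (h0 : 0 < lam) (hL1 : L = 1) (v₀ : Fin (L+1)) :
    ∑ t ∈ range L, |lump L (Pk L lam 0 v₀) t - sigmaV L lam t| = 0 := by
  subst hL1
  rw [Finset.sum_range_one]
  have hzero : ∑ t ∈ range 1, (lump 1 (Pk 1 lam 0 v₀) t - sigmaV 1 lam t) = 0 := by
    rw [Finset.sum_sub_distrib, lump_Pk_sum (by norm_num) h0, sigmaV_sum (by norm_num) h0]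
    ring
  rw [Finset.sum_range_one] at hzero
  rw [hzero]
  exact abs_zero

end facts

/-- the conditional distribution of `g_m` given `ω_k = v₀`, `n = m-1-k` steps. -/
def condF (L : ℕ) (lam : ℝ) (n : ℕ) (v₀ : Fin (L+1)) (a : G L) : ℝ :=
  ∑ x : Fin (L+1), ∑ y : Fin (L+1),
    (if comp1 L x = a.1 ∧ comp2 L y = a.2 then Pk L lam n v₀ x * Pmat L lam x y else 0)

def Sfun (L : ℕ) (lam : ℝ) (t : ℕ) (a : G L) : ℝ :=
  ∑ y : Fin (L+1),
    (if ((t:ℕ) : ZMod (2*L)) = a.1 ∧ comp2 L y = a.2 then Prow L lam t y else 0)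

section facts2
variable {L : ℕ} {lam : ℝ}

lemma comp1_eq_cast (x : Fin (L+1)) :
    comp1 L x = ((cls L x : ℕ) : ZMod (2*L)) := by
  unfold comp1 cls
  rcases Nat.lt_or_ge x.val L with h | h
  · rw [if_pos h, if_neg (by omega)]
  · have hx : x.val = L := by omega
    rw [if_neg (by omega), if_pos hx, Nat.cast_zero]

lemma Sfun_nonneg (h0 : 0 < lam) (h1 : lam < 1) (t : ℕ) (a : G L) :
    0 ≤ Sfun L lam t a := by
  apply Finset.sum_nonneg
  intro y _
  split_ifs
  · exact Prow_nonneg h0 h1 _ _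
  · exact le_refl 0

lemma condF_eq (hL : 0 < L) (n : ℕ) (v₀ : Fin (L+1)) (a : G L) :
    condF L lam n v₀ a
      = ∑ t ∈ range L, lump L (Pk L lam n v₀) t * Sfun L lam t a := by
  have hcommon : ∀ x : Fin (L+1),
      (∑ y : Fin (L+1), (if comp1 L x = a.1 ∧ comp2 L y = a.2
          then Pk L lam n v₀ x * Pmat L lam x y else 0))
        = Pk L lam n v₀ x * Sfun L lam (cls L x) a := by
    intro x
    unfold Sfun
    rw [Finset.mul_sum]
    apply Finset.sum_congr rfl
    intro y _
    rw [mul_ite, mul_zero, comp1_eq_cast, Pmat_eq_Prow]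
  have lhs : condF L lam n v₀ a = ∑ x : Fin (L+1), Pk L lam n v₀ x * Sfun L lam (cls L x) a := by
    unfold condF
    exact Finset.sum_congr rfl (fun x _ => hcommon x)
  rw [lhs, ← sum_fiber (fun x => Pk L lam n v₀ x * Sfun L lam (cls L x) a) hL]
  apply Finset.sum_congr rfl
  intro t _
  unfold lump
  rw [Finset.sum_mul]
  apply Finset.sum_congr rfl
  intro x _
  rw [ite_mul, zero_mul]
  by_cases h : cls L x = t
  · rw [if_pos h, if_pos h, h]
  · rw [if_neg h, if_neg h]

lemma Sfun_total [NeZero (2*L)] (hL : 0 < L) (h0 : 0 < lam) (t : ℕ) (ht : t < L) :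
    ∑ a : G L, Sfun L lam t a = 1 := by
  unfold Sfun
  rw [Finset.sum_comm]
  have hy : ∀ y : Fin (L+1),
      ∑ a : G L, (if ((t:ℕ) : ZMod (2*L)) = a.1 ∧ comp2 L y = a.2 then Prow L lam t y else 0)
        = Prow L lam t y := by
    intro y
    have hcond : ∀ a : G L,
        ((((t:ℕ) : ZMod (2*L)) = a.1 ∧ comp2 L y = a.2))
          = (((((t:ℕ) : ZMod (2*L)), comp2 L y) : G L) = a) := by
      intro a
      apply propext
      constructor
      · rintro ⟨hu, hv⟩
        exact Prod.ext hu hv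
      · intro h
        rw [← h]
        exact ⟨rfl, rfl⟩
    simp only [hcond]
    rw [Finset.sum_ite_eq]
    simp
  rw [Finset.sum_congr rfl (fun y _ => hy y)]
  exact Prow_rowsum h0 t ht

lemma comp2_eq_iff (hL : 0 < L) (y : Fin (L+1)) (v : ZMod (2*L)) [NeZero (2*L)] :
    comp2 L y = v ↔ y.val = v.val := by
  unfold comp2
  constructor
  · intro h
    have : ((y.val : ZMod (2*L))).val = v.val := by rw [h]
    rwa [ZMod.val_cast_of_lt (by omega : y.val < 2*L)] at this
  · intro h
    have : ((v.val : ℕ) : ZMod (2*L)) = v := ZMod.natCast_rightInverse v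
    rw [h, this]

lemma pi_eq [NeZero (2*L)] (hL : 0 < L) (h0 : 0 < lam) (h1 : lam < 1) (a : G L) :
    piExplicit L lam a = ∑ t ∈ range L, sigmaV L lam t * Sfun L lam t a := by
  have hcastinj : ∀ t, t < L → ((t : ℕ) : ZMod (2*L)) = a.1 → t = a.1.val := by
    intro t ht h
    have := ZMod.val_cast_of_lt (by omega : t < 2*L)
    rw [h] at this
    omega
  have hSzero : ∀ t ∈ range L, t ≠ a.1.val → sigmaV L lam t * Sfun L lam t a = 0 := by
    intro t ht hne
    rw [Finset.mem_range] at ht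
    have : Sfun L lam t a = 0 := by
      apply Finset.sum_eq_zero
      intro y _
      apply if_neg
      rintro ⟨hu, -⟩
      exact hne (hcastinj t ht hu)
    rw [this, mul_zero]
  rcases Nat.lt_or_ge a.1.val L with hx | hx
  · -- a.1.val < L
    have hcast1 : ((a.1.val : ℕ) : ZMod (2*L)) = a.1 := ZMod.natCast_rightInverse a.1
    have hsum : ∑ t ∈ range L, sigmaV L lam t * Sfun L lam t a
        = sigmaV L lam a.1.val * Sfun L lam a.1.val a := by
      apply Finset.sum_eq_single_of_mem a.1.val (Finset.mem_range.mpr hx)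
      intro t ht hne
      exact hSzero t ht hne
    rw [hsum]
    rcases Nat.lt_or_ge a.2.val (L+1) with hy | hy
    · -- a.2.val ≤ L
      have hSval : Sfun L lam a.1.val a = Prow L lam a.1.val ⟨a.2.val, hy⟩ := by
        unfold Sfun
        rw [Finset.sum_eq_single_of_mem (⟨a.2.val, hy⟩ : Fin (L+1)) (Finset.mem_univ _)]
        · rw [if_pos]
          refine ⟨hcast1, ?_⟩
          rw [comp2_eq_iff hL]
        · intro y _ hne
          apply if_neg
          rintro ⟨-, hv⟩
          rw [comp2_eq_iff hL] at hv
          exact hne (Fin.ext hv)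
      have hPro : Prow L lam a.1.val (⟨a.2.val, hy⟩ : Fin (L+1))
          = if a.2.val = L then (1-lam)^(L - a.1.val)
            else if a.1.val ≤ a.2.val then (1-lam)^(a.2.val - a.1.val) * lam else 0 := rfl
      rw [hSval, hPro]
      simp only [sigmaV]
      rcases Nat.eq_zero_or_pos a.1.val with hx0 | hx0
      · rw [if_pos hx0]
        rcases Nat.lt_or_ge a.2.val L with hyL | hyL
        · rw [if_neg (by omega), if_pos (by omega), hx0, Nat.sub_zero]
          simp only [piExplicit]
          split_ifs with c1 c2 c3 <;> try (exfalso; omega)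
          field_simp
          try ring
        · have hyL' : a.2.val = L := by omega
          rw [if_pos hyL', hx0, Nat.sub_zero]
          simp only [piExplicit]
          split_ifs with c1 <;> try (exfalso; omega)
          field_simp
      · rw [if_neg (by omega)]
        rcases Nat.lt_or_ge a.2.val L with hyL | hyL
        · rw [if_neg (by omega)]
          rcases le_or_gt a.1.val a.2.val with hxy | hxy
          · rw [if_pos hxy]
            simp only [piExplicit]
            split_ifs with c1 c2 c3 c4 <;> try (exfalso; omega)
            field_simp
            try ring
          · rw [if_neg (by omega), mul_zero]
            simp only [piExplicit]
            split_ifs with c1 c2 c3 c4 <;> try (exfalso; omega)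
            rfl
        · rw [if_pos (by omega)]
          simp only [piExplicit]
          split_ifs with c1 c2 <;> try (exfalso; omega)
          field_simp
          try ring
    · -- a.2.val > L : Sfun = 0 and pi = 0
      have hSval : Sfun L lam a.1.val a = 0 := by
        apply Finset.sum_eq_zero
        intro y _
        apply if_neg
        rintro ⟨-, hv⟩
        rw [comp2_eq_iff hL] at hv
        omega
      rw [hSval, mul_zero]
      simp only [piExplicit]
      split_ifs with c1 c2 c3 c4 <;> try (exfalso; omega)
      rfl
  · -- a.1.val ≥ L : both sides zero
    have : ∑ t ∈ range L, sigmaV L lam t * Sfun L lam t a = 0 := by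
      apply Finset.sum_eq_zero
      intro t ht
      exact hSzero t ht (by rw [Finset.mem_range] at ht; omega)
    rw [this]
    simp only [piExplicit]
    split_ifs with c1 c2 c3 c4 <;> try (exfalso; omega)
    rfl

lemma condF_nonneg (h0 : 0 < lam) (h1 : lam < 1) (n : ℕ) (v₀ : Fin (L+1)) (a : G L) :
    0 ≤ condF L lam n v₀ a := by
  apply Finset.sum_nonneg
  intro x _
  apply Finset.sum_nonneg
  intro y _
  split_ifs
  · exact mul_nonneg (Pk_nonneg h0 h1 n v₀ x) (Pmat_nonneg h0 h1 x y)
  · exact le_refl 0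

lemma comp2_inj [NeZero (2*L)] (hL : 0 < L) (v v' : Fin (L+1))
    (h : comp2 L v = comp2 L v') : v = v' := by
  have h1 := (comp2_eq_iff hL v (comp2 L v')).mp h
  have h2 := (comp2_eq_iff hL v' (comp2 L v')).mp rfl
  exact Fin.ext (by omega)

lemma TV_bound [NeZero (2*L)] (hL : 0 < L) (h0 : 0 < lam) (h1 : lam < 1)
    (n : ℕ) (v₀ : Fin (L+1)) :
    ∑ a : G L, |condF L lam n v₀ a - piExplicit L lam a|
      ≤ (1 - (1-lam)^(L-1))^n
          * ∑ t ∈ range L, |lump L (Pk L lam 0 v₀) t - sigmaV L lam t| := by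
  have key : ∀ a : G L, |condF L lam n v₀ a - piExplicit L lam a|
      ≤ ∑ t ∈ range L, |lump L (Pk L lam n v₀) t - sigmaV L lam t| * Sfun L lam t a := by
    intro a
    rw [condF_eq hL, pi_eq hL h0 h1, ← Finset.sum_sub_distrib]
    refine (Finset.abs_sum_le_sum_abs _ _).trans ?_
    apply Finset.sum_le_sum
    intro t _
    rw [show lump L (Pk L lam n v₀) t * Sfun L lam t a - sigmaV L lam t * Sfun L lam t a
        = (lump L (Pk L lam n v₀) t - sigmaV L lam t) * Sfun L lam t a from by ring]
    rw [abs_mul, abs_of_nonneg (Sfun_nonneg h0 h1 t a)]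
  refine (Finset.sum_le_sum (fun a _ => key a)).trans ?_
  rw [Finset.sum_comm]
  have : ∀ t ∈ range L, ∑ a : G L, |lump L (Pk L lam n v₀) t - sigmaV L lam t| * Sfun L lam t a
      = |lump L (Pk L lam n v₀) t - sigmaV L lam t| := by
    intro t ht
    rw [← Finset.mul_sum, Sfun_total hL h0 t (Finset.mem_range.mp ht), mul_one]
  rw [Finset.sum_congr rfl this]
  exact iterate_bound hL h0 h1 v₀ n

lemma pi_sum_one [NeZero (2*L)] (hL : 0 < L) (h0 : 0 < lam) (h1 : lam < 1) :
    ∑ a : G L, piExplicit L lam a = 1 := by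
  have : ∀ a : G L, piExplicit L lam a = ∑ t ∈ range L, sigmaV L lam t * Sfun L lam t a :=
    pi_eq hL h0 h1
  rw [Finset.sum_congr rfl (fun a _ => this a), Finset.sum_comm]
  have h2 : ∀ t ∈ range L, ∑ a : G L, sigmaV L lam t * Sfun L lam t a = sigmaV L lam t := by
    intro t ht
    rw [← Finset.mul_sum, Sfun_total hL h0 t (Finset.mem_range.mp ht), mul_one]
  rw [Finset.sum_congr rfl h2]
  exact sigmaV_sum hL h0

lemma pi_nonneg [NeZero (2*L)] (hL : 0 < L) (h0 : 0 < lam) (h1 : lam < 1) (a : G L) :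
    0 ≤ piExplicit L lam a := by
  rw [pi_eq hL h0 h1]
  apply Finset.sum_nonneg
  intro t _
  exact mul_nonneg (sigmaV_nonneg hL h0 t) (Sfun_nonneg h0 h1 t a)

/-- The master analytic estimate, giving the constant `C`. -/
lemma exists_C [NeZero (2*L)] (hL : 0 < L) (h0 : 0 < lam) (h1 : lam < 1) :
    ∃ C : ℝ, 0 < C ∧ 2 ≤ C ∧ ∀ (n : ℕ) (v₀ : Fin (L+1)),
      ∑ a : G L, |condF L lam n v₀ a - piExplicit L lam a|
        ≤ C * (1 - (1-lam)^(L-1))^(n+1) := by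
  have ha : (0:ℝ) ≤ 1 - lam := by linarith
  have hb : 1 - lam ≤ 1 := by linarith
  set r : ℝ := 1 - (1-lam)^(L-1) with hrdef
  have hr0 : 0 ≤ r := by
    have := pow_le_one₀ ha hb (n := L-1)
    simp only [hrdef]
    linarith
  rcases eq_or_ne L 1 with hL1 | hL1
  · refine ⟨2, by norm_num, le_refl 2, ?_⟩
    intro n v₀
    have hB := base_eq_zero_L1 h0 hL1 v₀
    have := TV_bound hL h0 h1 n v₀
    rw [hB, mul_zero] at this
    refine this.trans ?_
    positivity
  · -- L ≥ 2, so r ≥ lam > 0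
    have hL2 : 2 ≤ L := by omega
    have hrpos : 0 < r := by
      have h2 : (1-lam)^(L-1) ≤ (1-lam)^1 := by
        apply pow_le_pow_of_le_one ha hb
        omega
      simp only [pow_one] at h2
      simp only [hrdef]
      linarith
    refine ⟨max 2 (2 / r), lt_of_lt_of_le (by norm_num) (le_max_left _ _), le_max_left _ _, ?_⟩
    intro n v₀
    have hB := base_le_two hL h0 h1 v₀
    have h3 := TV_bound hL h0 h1 n v₀
    have h4 : (1 - (1-lam)^(L-1))^n
          * ∑ t ∈ range L, |lump L (Pk L lam 0 v₀) t - sigmaV L lam t|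
        ≤ r^n * 2 := by
      apply mul_le_mul_of_nonneg_left hB
      exact pow_nonneg hr0 n
    refine (h3.trans h4).trans ?_
    have h5 : r^n * 2 = (2/r) * r^(n+1) := by
      rw [pow_succ]
      field_simp
    rw [h5]
    apply mul_le_mul_of_nonneg_right (le_max_right _ _)
    exact pow_nonneg hr0 _

end facts2



def E1 (L : ℕ) (lam : ℝ) (i j : Fin (L+1)) : ℝ≥0∞ := ENNReal.ofReal (Pmat L lam i j)

def Ek (L : ℕ) (lam : ℝ) : ℕ → Fin (L+1) → Fin (L+1) → ℝ≥0∞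
  | 0 => fun i j => if i = j then 1 else 0
  | n+1 => fun i j => ∑ w : Fin (L+1), E1 L lam i w * Ek L lam n w j

lemma Ek_eq_ofReal {L lam} (h0 : 0 < lam) (h1 : lam < 1) (n : ℕ) (i j : Fin (L+1)) :
    Ek L lam n i j = ENNReal.ofReal (Pk L lam n i j) := by
  induction n generalizing i j with
  | zero =>
    show (if i = j then (1:ℝ≥0∞) else 0) = _
    unfold Pk
    split_ifs <;> simp
  | succ n ih =>
    show ∑ w : Fin (L+1), E1 L lam i w * Ek L lam n w j = _
    unfold Pk
    have e1 : ∀ w : Fin (L+1), E1 L lam i w * Ek L lam n w j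
        = ENNReal.ofReal (Pmat L lam i w * Pk L lam n w j) := by
      intro w
      rw [ih, E1, ← ENNReal.ofReal_mul (Pmat_nonneg h0 h1 _ _)]
    rw [Finset.sum_congr rfl (fun w _ => e1 w)]
    rw [← ENNReal.ofReal_sum_of_nonneg
      (fun w _ => mul_nonneg (Pmat_nonneg h0 h1 _ _) (Pk_nonneg h0 h1 _ _ _))]

lemma Ek_one {L lam} (i j : Fin (L+1)) : Ek L lam 1 i j = E1 L lam i j := by
  show ∑ w : Fin (L+1), E1 L lam i w * Ek L lam 0 w j = _
  have : ∀ w : Fin (L+1), E1 L lam i w * Ek L lam 0 w j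
      = if w = j then E1 L lam i w else 0 := by
    intro w
    show E1 L lam i w * (if w = j then 1 else 0) = _
    split_ifs <;> simp
  rw [Finset.sum_congr rfl (fun w _ => this w)]
  rw [Finset.sum_ite_eq' Finset.univ j (fun w => E1 L lam i w)]
  simp

section prob
variable {L : ℕ} {lam : ℝ}
variable {Ω : Type} [MeasureSpace Ω] [IsProbabilityMeasure (ℙ : Measure Ω)]
variable (W : ℕ → Ω → Fin (L+1))

/-- cylinder set: trajectory up to time `k` equals `p`. -/
def cylF (k : ℕ) (p : Fin (k+1) → Fin (L+1)) : Set Ω :=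
  {ω | ∀ i : Fin (k+1), W i.val ω = p i}

lemma cylF_measurable (hWMeas : ∀ k, Measurable (W k)) (k : ℕ) (p : Fin (k+1) → Fin (L+1)) :
    MeasurableSet (cylF W k p) := by
  have : cylF W k p = ⋂ i : Fin (k+1), (W i.val)⁻¹' {p i} := by
    ext ω; simp [cylF, Set.mem_iInter]
  rw [this]
  exact MeasurableSet.iInter fun i => hWMeas i.val (measurableSet_singleton _)

lemma phiSet_eq_biUnion (k : ℕ) (φ : (Fin (k+1) → Fin (L+1)) → Prop) [DecidablePred φ] :
    {ω | φ (fun i => W i.val ω)}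
      = ⋃ p ∈ Finset.univ.filter φ, cylF W k p := by
  ext ω
  simp only [Set.mem_setOf_eq, Set.mem_iUnion, Finset.mem_filter, Finset.mem_univ, true_and]
  constructor
  · intro h
    exact ⟨fun i => W i.val ω, h, fun i => rfl⟩
  · rintro ⟨p, hp, hcyl⟩
    have : (fun i : Fin (k+1) => W i.val ω) = p := funext hcyl
    rwa [this]

lemma cylF_pairwiseDisjoint (k : ℕ) (s : Finset (Fin (k+1) → Fin (L+1))) :
    (s : Set (Fin (k+1) → Fin (L+1))).PairwiseDisjoint (cylF W k) := by
  intro p _ q _ hpq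
  rw [Function.onFun, Set.disjoint_left]
  intro ω hωp hωq
  apply hpq
  funext i
  rw [← hωp i, ← hωq i]

lemma measure_inter_phiSet (hWMeas : ∀ k, Measurable (W k)) (k : ℕ)
    (φ : (Fin (k+1) → Fin (L+1)) → Prop) [DecidablePred φ] (A : Set Ω) (hA : MeasurableSet A) :
    ℙ (A ∩ {ω | φ (fun i => W i.val ω)})
      = ∑ p ∈ Finset.univ.filter φ, ℙ (A ∩ cylF W k p) := by
  rw [phiSet_eq_biUnion W k φ, Set.inter_iUnion₂]
  rw [measure_biUnion_finset]
  · intro p _ q _ hpq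
    exact Set.disjoint_of_subset Set.inter_subset_right Set.inter_subset_right
      (cylF_pairwiseDisjoint W k (Finset.univ.filter φ) (by simp_all) (by simp_all) hpq)
  · intro p _
    exact MeasurableSet.inter hA (cylF_measurable W hWMeas k p)

lemma step_cylF (hWMarkov : ∀ (k : ℕ) (path : ℕ → Fin (L+1)) (j : Fin (L+1)),
      ℙ ({ω | W (k+1) ω = j} ∩ {ω | ∀ i ≤ k, W i ω = path i})
        = ENNReal.ofReal (Pmat L lam (path k) j) * ℙ {ω | ∀ i ≤ k, W i ω = path i})
    (k : ℕ) (p : Fin (k+1) → Fin (L+1)) (j : Fin (L+1)) :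
    ℙ ({ω | W (k+1) ω = j} ∩ cylF W k p)
      = E1 L lam (p ⟨k, Nat.lt_succ_self k⟩) j * ℙ (cylF W k p) := by
  set path : ℕ → Fin (L+1) := fun i => if h : i < k+1 then p ⟨i, h⟩ else p ⟨k, Nat.lt_succ_self k⟩
    with hpath
  have hset : {ω | ∀ i ≤ k, W i ω = path i} = cylF W k p := by
    ext ω
    simp only [Set.mem_setOf_eq, cylF]
    constructor
    · intro h i
      have h2 := h i.val (Nat.lt_succ_iff.mp i.isLt)
      rw [hpath] at h2
      simp only [dif_pos i.isLt] at h2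
      rwa [Fin.eta] at h2
    · intro h i hi
      have hlt : i < k+1 := by omega
      rw [hpath]
      simp only [dif_pos hlt]
      exact h ⟨i, hlt⟩
  have hk : path k = p ⟨k, Nat.lt_succ_self k⟩ := by
    rw [hpath]
    simp only [dif_pos (Nat.lt_succ_self k)]
  have := hWMarkov k path j
  rw [hset, hk] at this
  exact this

lemma onestep_phi (hWMarkov : ∀ (k : ℕ) (path : ℕ → Fin (L+1)) (j : Fin (L+1)),
      ℙ ({ω | W (k+1) ω = j} ∩ {ω | ∀ i ≤ k, W i ω = path i})
        = ENNReal.ofReal (Pmat L lam (path k) j) * ℙ {ω | ∀ i ≤ k, W i ω = path i})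
    (hWMeas : ∀ k, Measurable (W k)) (k : ℕ)
    (φ : (Fin (k+1) → Fin (L+1)) → Prop) [DecidablePred φ] (w : Fin (L+1)) :
    ℙ ({ω | W (k+1) ω = w} ∩ {ω | φ (fun i => W i.val ω)})
      = ∑ u : Fin (L+1), E1 L lam u w * ℙ ({ω | W k ω = u} ∩ {ω | φ (fun i => W i.val ω)}) := by
  have hAmeas : ∀ (j : ℕ) (u : Fin (L+1)), MeasurableSet {ω | W j ω = u} := by
    intro j u
    exact hWMeas j (measurableSet_singleton u)
  rw [measure_inter_phiSet W hWMeas k φ _ (hAmeas (k+1) w)]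
  have hL1 : ∀ p ∈ Finset.univ.filter φ, ℙ ({ω | W (k+1) ω = w} ∩ cylF W k p)
      = E1 L lam (p ⟨k, Nat.lt_succ_self k⟩) w * ℙ (cylF W k p) :=
    fun p _ => step_cylF W hWMarkov k p w
  rw [Finset.sum_congr rfl hL1]
  have hR : ∀ u : Fin (L+1), ℙ ({ω | W k ω = u} ∩ {ω | φ (fun i => W i.val ω)})
      = ∑ p ∈ Finset.univ.filter φ,
          (if p ⟨k, Nat.lt_succ_self k⟩ = u then ℙ (cylF W k p) else 0) := by
    intro u
    rw [measure_inter_phiSet W hWMeas k φ _ (hAmeas k u)]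
    apply Finset.sum_congr rfl
    intro p _
    have : ({ω | W k ω = u} ∩ cylF W k p)
        = if p ⟨k, Nat.lt_succ_self k⟩ = u then cylF W k p else ∅ := by
      ext ω
      simp only [Set.mem_inter_iff, Set.mem_setOf_eq]
      split_ifs with h
      · constructor
        · rintro ⟨-, hc⟩; exact hc
        · intro hc
          refine ⟨?_, hc⟩
          have := hc ⟨k, Nat.lt_succ_self k⟩
          rw [h] at this
          exact this
      · constructor
        · rintro ⟨hw, hc⟩
          exact absurd (by rw [← hc ⟨k, Nat.lt_succ_self k⟩]; exact hw) h
        · intro hc; exact absurd hc (Set.notMem_empty ω)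
    rw [this]
    split_ifs
    · rfl
    · exact measure_empty
  have hR2 : ∑ u : Fin (L+1), E1 L lam u w * ℙ ({ω | W k ω = u} ∩ {ω | φ (fun i => W i.val ω)})
      = ∑ p ∈ Finset.univ.filter φ,
          E1 L lam (p ⟨k, Nat.lt_succ_self k⟩) w * ℙ (cylF W k p) := by
    have e1 : ∀ u : Fin (L+1),
        E1 L lam u w * ∑ p ∈ Finset.univ.filter φ,
            (if p ⟨k, Nat.lt_succ_self k⟩ = u then ℙ (cylF W k p) else 0)
          = ∑ p ∈ Finset.univ.filter φ,
            (if p ⟨k, Nat.lt_succ_self k⟩ = u then E1 L lam u w * ℙ (cylF W k p) else 0) := by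
      intro u
      rw [Finset.mul_sum]
      apply Finset.sum_congr rfl
      intro p _
      rw [mul_ite, mul_zero]
    rw [Finset.sum_congr rfl (fun u _ => by rw [hR u, e1 u])]
    rw [Finset.sum_comm]
    apply Finset.sum_congr rfl
    intro p _
    have e2 : ∀ u : Fin (L+1),
        (if p ⟨k, Nat.lt_succ_self k⟩ = u then E1 L lam u w * ℙ (cylF W k p) else 0)
          = (if p ⟨k, Nat.lt_succ_self k⟩ = u
              then E1 L lam (p ⟨k, Nat.lt_succ_self k⟩) w * ℙ (cylF W k p) else 0) := by
      intro u
      by_cases h : p ⟨k, Nat.lt_succ_self k⟩ = u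
      · rw [if_pos h, if_pos h, h]
      · rw [if_neg h, if_neg h]
    rw [Finset.sum_congr rfl (fun u _ => e2 u)]
    rw [Finset.sum_ite_eq Finset.univ (p ⟨k, Nat.lt_succ_self k⟩)
      (fun _ => E1 L lam (p ⟨k, Nat.lt_succ_self k⟩) w * ℙ (cylF W k p))]
    simp
  rw [hR2]

lemma gOfW_measurable (hWMeas : ∀ k, Measurable (W k)) (j : ℕ) (a : G L) :
    MeasurableSet {ω | gOfW L W j ω = a} := by
  have hrw : {ω | gOfW L W j ω = a}
      = (W (j-1))⁻¹' {v | comp1 L v = a.1} ∩ (W j)⁻¹' {v | comp2 L v = a.2} := by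
    ext ω
    simp only [gOfW, Set.mem_setOf_eq, Set.mem_inter_iff, Set.mem_preimage, Prod.ext_iff]
  rw [hrw]
  exact (hWMeas _ ((Set.toFinite _).measurableSet)).inter
    (hWMeas _ ((Set.toFinite _).measurableSet))

lemma markov_iter (hWMarkov : ∀ (k : ℕ) (path : ℕ → Fin (L+1)) (j : Fin (L+1)),
      ℙ ({ω | W (k+1) ω = j} ∩ {ω | ∀ i ≤ k, W i ω = path i})
        = ENNReal.ofReal (Pmat L lam (path k) j) * ℙ {ω | ∀ i ≤ k, W i ω = path i})
    (hWMeas : ∀ k, Measurable (W k)) :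
    ∀ (n k : ℕ) (φ : (Fin (k+1) → Fin (L+1)) → Prop) [DecidablePred φ] (x : Fin (L+1)),
      ℙ ({ω | W (k+n) ω = x} ∩ {ω | φ (fun i => W i.val ω)})
        = ∑ w : Fin (L+1), Ek L lam n w x
            * ℙ ({ω | W k ω = w} ∩ {ω | φ (fun i => W i.val ω)}) := by
  intro n
  induction n with
  | zero =>
    intro k φ _ x
    have e1 : ∀ w : Fin (L+1), Ek L lam 0 w x
          * ℙ ({ω | W k ω = w} ∩ {ω | φ (fun i => W i.val ω)})
        = if w = x then ℙ ({ω | W k ω = w} ∩ {ω | φ (fun i => W i.val ω)}) else 0 := by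
      intro w
      show (if w = x then (1:ℝ≥0∞) else 0) * _ = _
      split_ifs <;> simp
    rw [Finset.sum_congr rfl (fun w _ => e1 w)]
    have e2 : ∀ w : Fin (L+1),
        (if w = x then ℙ ({ω | W k ω = w} ∩ {ω | φ (fun i => W i.val ω)}) else 0)
          = (if w = x then ℙ ({ω | W k ω = x} ∩ {ω | φ (fun i => W i.val ω)}) else 0) := by
      intro w
      by_cases h : w = x
      · rw [if_pos h, if_pos h, h]
      · rw [if_neg h, if_neg h]
    rw [Finset.sum_congr rfl (fun w _ => e2 w)]
    rw [Finset.sum_ite_eq' Finset.univ x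
      (fun _ => ℙ ({ω | W k ω = x} ∩ {ω | φ (fun i => W i.val ω)}))]
    simp
  | succ n ih =>
    intro k φ _ x
    haveI : DecidablePred (fun q : Fin (k+2) → Fin (L+1) => φ (fun i => q i.castSucc)) :=
      fun q => by dsimp only; infer_instance
    have hsets : {ω | (fun q : Fin (k+2) → Fin (L+1) => φ (fun i => q i.castSucc))
          (fun i => W i.val ω)} = {ω | φ (fun i => W i.val ω)} := by
      ext ω
      simp only [Set.mem_setOf_eq]
      have : (fun i : Fin (k+1) => W (i.castSucc).val ω) = (fun i : Fin (k+1) => W i.val ω) := by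
        funext i
        rfl
      rw [this]
    have hidx : k + (n+1) = (k+1) + n := by omega
    have h1 := ih (k+1) (fun q : Fin (k+2) → Fin (L+1) => φ (fun i => q i.castSucc)) x
    rw [hsets] at h1
    rw [hidx, h1]
    have h2 : ∀ w : Fin (L+1), ℙ ({ω | W (k+1) ω = w} ∩ {ω | φ (fun i => W i.val ω)})
        = ∑ u : Fin (L+1), E1 L lam u w
            * ℙ ({ω | W k ω = u} ∩ {ω | φ (fun i => W i.val ω)}) :=
      fun w => onestep_phi W hWMarkov hWMeas k φ w
    calc ∑ w : Fin (L+1), Ek L lam n w x * ℙ ({ω | W (k+1) ω = w} ∩ {ω | φ (fun i => W i.val ω)})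
        = ∑ w : Fin (L+1), ∑ u : Fin (L+1), Ek L lam n w x * (E1 L lam u w
            * ℙ ({ω | W k ω = u} ∩ {ω | φ (fun i => W i.val ω)})) := by
          apply Finset.sum_congr rfl
          intro w _
          rw [h2 w, Finset.mul_sum]
      _ = ∑ u : Fin (L+1), (∑ w : Fin (L+1), E1 L lam u w * Ek L lam n w x)
            * ℙ ({ω | W k ω = u} ∩ {ω | φ (fun i => W i.val ω)}) := by
          rw [Finset.sum_comm]
          apply Finset.sum_congr rfl
          intro u _
          rw [Finset.sum_mul]
          apply Finset.sum_congr rfl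
          intro w _
          ring
      _ = ∑ u : Fin (L+1), Ek L lam (n+1) u x
            * ℙ ({ω | W k ω = u} ∩ {ω | φ (fun i => W i.val ω)}) := rfl

end prob

/-- **Lemma A.1**: `{g_k}_{k≥1}` is a Markov chain on `G`, and its conditional laws
converge in total variation to the explicit distribution `piExplicit` at rate
`1 − (1−λ)^{L−1}`. -/
theorem explicit_stationary_distribution
    (L : ℕ) (hL : 0 < L) [NeZero (2*L)]
    (lam : ℝ) (hlam : lam ∈ Set.Ioo (0:ℝ) 1)
    {Ω : Type} [MeasureSpace Ω] [IsProbabilityMeasure (ℙ : Measure Ω)]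
    (W : ℕ → Ω → Fin (L+1)) (hWMeas : ∀ k, Measurable (W k))
    (hW0 : ∀ ω, W 0 ω = ⟨0, Nat.succ_pos L⟩)
    (hWMarkov : ∀ (k : ℕ) (path : ℕ → Fin (L+1)) (j : Fin (L+1)),
      ℙ ({ω | W (k+1) ω = j} ∩ {ω | ∀ i ≤ k, W i ω = path i})
        = ENNReal.ofReal (Pmat L lam (path k) j) * ℙ {ω | ∀ i ≤ k, W i ω = path i}) :
    -- (a) {g_k}_{k≥1} is a time-homogeneous Markov chain on G
    (∃ κ : G L → G L → ℝ≥0∞,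
      ∀ (k : ℕ), 1 ≤ k → ∀ (path : ℕ → G L) (a : G L),
        ℙ ({ω | gOfW L W (k+1) ω = a} ∩ {ω | ∀ j, 1 ≤ j → j ≤ k → gOfW L W j ω = path j})
          = κ (path k) a * ℙ {ω | ∀ j, 1 ≤ j → j ≤ k → gOfW L W j ω = path j}) ∧
    -- (b) exponential convergence towards the explicit distribution π
    (∃ C : ℝ, 0 < C ∧
      ∀ k m : ℕ, 1 ≤ k → k ≤ m → ∀ g' : G L,
        ℙ {ω | gOfW L W k ω = g'} ≠ 0 →
        ∑ a : G L,
          |((ℙ : Measure Ω)[|{ω | gOfW L W k ω = g'}] {ω | gOfW L W m ω = a}).toReal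
            - piExplicit L lam a|
          ≤ C * (1 - (1 - lam)^(L-1))^(m-k)) := by
  obtain ⟨h0, h1⟩ := hlam
  constructor
  · -- part (a)
    classical
    refine ⟨fun g a => ∑ v : Fin (L+1), ∑ y : Fin (L+1),
      (if comp2 L v = g.2 ∧ comp1 L v = a.1 ∧ comp2 L y = a.2
        then E1 L lam v y else 0), ?_⟩
    intro k hk path a
    have hEset : {ω | ∀ j, 1 ≤ j → j ≤ k → gOfW L W j ω = path j}
        = {ω | (fun p : Fin (k+1) → Fin (L+1) =>
            ∀ j : ℕ, 1 ≤ j → ∀ hj2 : j ≤ k,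
              ((comp1 L (p ⟨j-1, by omega⟩), comp2 L (p ⟨j, by omega⟩)) : G L) = path j)
          (fun i => W i.val ω)} := rfl
    rw [hEset]
    rw [measure_inter_phiSet W hWMeas k
      (fun p : Fin (k+1) → Fin (L+1) =>
        ∀ j : ℕ, 1 ≤ j → ∀ hj2 : j ≤ k,
          ((comp1 L (p ⟨j-1, by omega⟩), comp2 L (p ⟨j, by omega⟩)) : G L) = path j)
      _ (gOfW_measurable W hWMeas (k+1) a)]
    have hPE : ℙ {ω | (fun p : Fin (k+1) → Fin (L+1) =>
            ∀ j : ℕ, 1 ≤ j → ∀ hj2 : j ≤ k,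
              ((comp1 L (p ⟨j-1, by omega⟩), comp2 L (p ⟨j, by omega⟩)) : G L) = path j)
          (fun i => W i.val ω)}
        = ∑ p ∈ Finset.univ.filter (fun p : Fin (k+1) → Fin (L+1) =>
            ∀ j : ℕ, 1 ≤ j → ∀ hj2 : j ≤ k,
              ((comp1 L (p ⟨j-1, by omega⟩), comp2 L (p ⟨j, by omega⟩)) : G L) = path j),
            ℙ (cylF W k p) := by
      have h2 := measure_inter_phiSet W hWMeas k (fun p : Fin (k+1) → Fin (L+1) =>
            ∀ j : ℕ, 1 ≤ j → ∀ hj2 : j ≤ k,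
              ((comp1 L (p ⟨j-1, by omega⟩), comp2 L (p ⟨j, by omega⟩)) : G L) = path j)
        Set.univ MeasurableSet.univ
      rw [Set.univ_inter] at h2
      rw [h2]
      exact Finset.sum_congr rfl (fun p _ => by rw [Set.univ_inter])
    rw [hPE, Finset.mul_sum]
    apply Finset.sum_congr rfl
    intro p hp
    rw [Finset.mem_filter] at hp
    have hφp := hp.2
    have hpk := hφp k hk (le_refl k)
    have hsnd : comp2 L (p ⟨k, Nat.lt_succ_self k⟩) = (path k).2 :=
      congrArg Prod.snd hpk
    -- decompose the event {gOfW (k+1) = a} over the value of W (k+1)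
    have hdecA : {ω | gOfW L W (k+1) ω = a} ∩ cylF W k p
        = ⋃ y ∈ Finset.univ.filter (fun y : Fin (L+1) =>
            comp1 L (p ⟨k, Nat.lt_succ_self k⟩) = a.1 ∧ comp2 L y = a.2),
            ({ω | W (k+1) ω = y} ∩ cylF W k p) := by
      ext ω
      simp only [Set.mem_inter_iff, Set.mem_setOf_eq, Set.mem_iUnion, Finset.mem_filter,
        Finset.mem_univ, true_and]
      constructor
      · rintro ⟨hg, hcyl⟩
        have hWk : W k ω = p ⟨k, Nat.lt_succ_self k⟩ := hcyl ⟨k, Nat.lt_succ_self k⟩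
        refine ⟨W (k+1) ω, ⟨?_, congrArg Prod.snd hg⟩, rfl, hcyl⟩
        have h1 := congrArg Prod.fst hg
        rw [← hWk]
        exact h1
      · rintro ⟨y, ⟨h1c, h2c⟩, hy, hcyl⟩
        refine ⟨?_, hcyl⟩
        have hWk : W k ω = p ⟨k, Nat.lt_succ_self k⟩ := hcyl ⟨k, Nat.lt_succ_self k⟩
        show (comp1 L (W k ω), comp2 L (W (k+1) ω)) = a
        rw [hWk, hy]
        exact Prod.ext h1c h2c
    rw [hdecA, measure_biUnion_finset]
    · have e1 : ∀ y ∈ Finset.univ.filter (fun y : Fin (L+1) =>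
          comp1 L (p ⟨k, Nat.lt_succ_self k⟩) = a.1 ∧ comp2 L y = a.2),
          ℙ ({ω | W (k+1) ω = y} ∩ cylF W k p)
            = E1 L lam (p ⟨k, Nat.lt_succ_self k⟩) y * ℙ (cylF W k p) :=
        fun y _ => step_cylF W hWMarkov k p y
      rw [Finset.sum_congr rfl e1, Finset.sum_filter]
      have e2 : ∀ y : Fin (L+1),
          (if comp1 L (p ⟨k, Nat.lt_succ_self k⟩) = a.1 ∧ comp2 L y = a.2
            then E1 L lam (p ⟨k, Nat.lt_succ_self k⟩) y * ℙ (cylF W k p) else 0)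
          = (if comp1 L (p ⟨k, Nat.lt_succ_self k⟩) = a.1 ∧ comp2 L y = a.2
              then E1 L lam (p ⟨k, Nat.lt_succ_self k⟩) y else 0) * ℙ (cylF W k p) := by
        intro y
        rw [ite_mul, zero_mul]
      rw [Finset.sum_congr rfl (fun y _ => e2 y), ← Finset.sum_mul]
      congr 1
      -- identify the κ value
      show ∑ y : Fin (L+1), _ = ∑ v : Fin (L+1), ∑ y : Fin (L+1),
        (if comp2 L v = (path k).2 ∧ comp1 L v = a.1 ∧ comp2 L y = a.2
          then E1 L lam v y else 0)
      rw [Finset.sum_eq_single (p ⟨k, Nat.lt_succ_self k⟩)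
        (f := fun v => ∑ y : Fin (L+1),
          (if comp2 L v = (path k).2 ∧ comp1 L v = a.1 ∧ comp2 L y = a.2
            then E1 L lam v y else 0))]
      · apply Finset.sum_congr rfl
        intro y _
        exact (if_congr (and_iff_right hsnd) rfl rfl).symm
      · intro v _ hv
        apply Finset.sum_eq_zero
        intro y _
        apply if_neg
        rintro ⟨hv2, -⟩
        exact hv (comp2_inj hL _ _ (hv2.trans hsnd.symm))
      · intro h
        exact absurd (Finset.mem_univ _) h
    · intro y _ y' _ hyy
      rw [Function.onFun, Set.disjoint_left]
      rintro ω ⟨hy1, -⟩ ⟨hy2, -⟩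
      exact hyy (hy1.symm.trans hy2)
    · intro y _
      exact (hWMeas (k+1) (measurableSet_singleton _)).inter
        (cylF_measurable W hWMeas k p)
  · -- part (b)
    obtain ⟨C, hCpos, hC2, hCbound⟩ := exists_C (L := L) (lam := lam) hL h0 h1
    refine ⟨C, hCpos, ?_⟩
    intro k m hk hkm g' hPB
    classical
    set B := {ω | gOfW L W k ω = g'} with hBdef
    have hBmeas : MeasurableSet B := gOfW_measurable W hWMeas k g'
    have hkk : k - 1 < k + 1 := by omega
    have hBset : B = {ω | (fun p : Fin (k+1) → Fin (L+1) =>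
        ((comp1 L (p ⟨k-1, hkk⟩), comp2 L (p ⟨k, Nat.lt_succ_self k⟩)) : G L) = g')
          (fun i => W i.val ω)} := rfl
    have hBne : B.Nonempty := by
      rcases Set.eq_empty_or_nonempty B with h | h
      · exact absurd (by rw [h]; exact measure_empty) hPB
      · exact h
    obtain ⟨ω₀, hω₀⟩ := hBne
    set v₀ := W k ω₀ with hv₀def
    have hgv : gOfW L W k ω₀ = g' := hω₀
    have hv2 : comp2 L v₀ = g'.2 := congrArg Prod.snd hgv
    have hBsub : B ⊆ {ω | W k ω = v₀} := by
      intro ω hω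
      have h2 : comp2 L (W k ω) = g'.2 := congrArg Prod.snd hω
      exact comp2_inj hL _ _ (h2.trans hv2.symm)
    have hWkB : ∀ w : Fin (L+1), ({ω | W k ω = w} ∩ B)
        = if w = v₀ then B else ∅ := by
      intro w
      split_ifs with h
      · subst h
        apply Set.inter_eq_self_of_subset_right
        exact hBsub
      · ext ω
        simp only [Set.mem_inter_iff, Set.mem_setOf_eq, Set.mem_empty_iff_false, iff_false,
          not_and]
        intro hw hB
        exact h ((hw.symm.trans (hBsub hB) : w = v₀))
    rcases eq_or_lt_of_le hkm with heq | hlt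
    · -- m = k
      subst heq
      simp only [Nat.sub_self, pow_zero, mul_one]
      have hval : ∀ a : G L, (ℙ : Measure Ω)[|B] {ω | gOfW L W k ω = a}
          = if a = g' then 1 else 0 := by
        intro a
        rw [ProbabilityTheory.cond_apply hBmeas]
        split_ifs with ha
        · subst ha
          rw [Set.inter_eq_self_of_subset_right (by intro ω hω; exact hω)]
          exact ENNReal.inv_mul_cancel hPB (measure_ne_top _ _)
        · have : B ∩ {ω | gOfW L W k ω = a} = ∅ := by
            ext ω
            simp only [Set.mem_inter_iff, Set.mem_setOf_eq, Set.mem_empty_iff_false, iff_false,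
              not_and]
            intro hB hA
            exact ha (hA.symm.trans hB)
          rw [this, measure_empty, mul_zero]
      have hvalR : ∀ a : G L, ((ℙ : Measure Ω)[|B] {ω | gOfW L W k ω = a}).toReal
          = if a = g' then (1:ℝ) else 0 := by
        intro a
        rw [hval a]
        split_ifs <;> simp
      have hbound : ∀ a : G L, |((ℙ : Measure Ω)[|B] {ω | gOfW L W k ω = a}).toReal
            - piExplicit L lam a|
          ≤ (if a = g' then (1:ℝ) else 0) + piExplicit L lam a := by
        intro a
        rw [hvalR a]
        have hπ := pi_nonneg (L := L) (lam := lam) hL h0 h1 a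
        have hind : (0:ℝ) ≤ if a = g' then (1:ℝ) else 0 := by split_ifs <;> norm_num
        rw [abs_sub_le_iff]
        constructor <;> [linarith [abs_nonneg (piExplicit L lam a)]; linarith]
      refine (Finset.sum_le_sum (fun a _ => hbound a)).trans ?_
      rw [Finset.sum_add_distrib, pi_sum_one (L := L) (lam := lam) hL h0 h1]
      rw [Finset.sum_ite_eq' Finset.univ g' (fun _ => (1:ℝ))]
      simp only [Finset.mem_univ, if_pos]
      linarith
    · -- k < m
      set n := m - 1 - k with hndef
      have step1 : ∀ x : Fin (L+1), ℙ ({ω | W (m-1) ω = x} ∩ B)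
          = Ek L lam n v₀ x * ℙ B := by
        intro x
        have hmi := markov_iter W hWMarkov hWMeas n k
          (fun p : Fin (k+1) → Fin (L+1) =>
            ((comp1 L (p ⟨k-1, hkk⟩), comp2 L (p ⟨k, Nat.lt_succ_self k⟩)) : G L) = g') x
        rw [← hBset] at hmi
        have hidx : k + n = m - 1 := by omega
        rw [hidx] at hmi
        rw [hmi]
        rw [Finset.sum_eq_single v₀]
        · rw [hWkB v₀, if_pos rfl]
        · intro w _ hw
          rw [hWkB w, if_neg hw, measure_empty, mul_zero]
        · intro h
          exact absurd (Finset.mem_univ _) h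
      have step2 : ∀ x y : Fin (L+1),
          ℙ ({ω | W m ω = y} ∩ ({ω | W (m-1) ω = x} ∩ B))
            = E1 L lam x y * (Ek L lam n v₀ x * ℙ B) := by
        intro x y
        have hk1m : k - 1 < (m-1)+1 := by omega
        have hkm1 : k < (m-1)+1 := by omega
        have hψset : {ω | (fun q : Fin ((m-1)+1) → Fin (L+1) =>
            (((comp1 L (q ⟨k-1, hk1m⟩), comp2 L (q ⟨k, hkm1⟩)) : G L) = g'
              ∧ q ⟨m-1, Nat.lt_succ_self _⟩ = x)) (fun i => W i.val ω)}
            = {ω | W (m-1) ω = x} ∩ B := by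
          ext ω
          simp only [Set.mem_setOf_eq, Set.mem_inter_iff]
          exact ⟨fun ⟨hg, hx⟩ => ⟨hx, hg⟩, fun ⟨hx, hg⟩ => ⟨hg, hx⟩⟩
        have hmi := markov_iter W hWMarkov hWMeas 1 (m-1)
          (fun q : Fin ((m-1)+1) → Fin (L+1) =>
            (((comp1 L (q ⟨k-1, hk1m⟩), comp2 L (q ⟨k, hkm1⟩)) : G L) = g'
              ∧ q ⟨m-1, Nat.lt_succ_self _⟩ = x)) y
        rw [hψset] at hmi
        have hidx2 : m - 1 + 1 = m := by omega
        rw [hidx2] at hmi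
        rw [hmi]
        have hWm1 : ∀ w : Fin (L+1), ({ω | W (m-1) ω = w} ∩ ({ω | W (m-1) ω = x} ∩ B))
            = if w = x then ({ω | W (m-1) ω = x} ∩ B) else ∅ := by
          intro w
          split_ifs with h
          · subst h
            rw [← Set.inter_assoc, Set.inter_self]
          · ext ω
            simp only [Set.mem_inter_iff, Set.mem_setOf_eq, Set.mem_empty_iff_false, iff_false,
              not_and]
            intro hw hx _
            exact h (hw.symm.trans hx)
        rw [Finset.sum_eq_single x]
        · rw [hWm1 x, if_pos rfl, Ek_one, step1 x]
        · intro w _ hw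
          rw [hWm1 w, if_neg hw, measure_empty, mul_zero]
        · intro h
          exact absurd (Finset.mem_univ _) h
      have step3 : ∀ a : G L, ℙ (B ∩ {ω | gOfW L W m ω = a})
          = ENNReal.ofReal (condF L lam n v₀ a) * ℙ B := by
        intro a
        have hdec : B ∩ {ω | gOfW L W m ω = a}
            = ⋃ xy ∈ (Finset.univ ×ˢ Finset.univ).filter
                (fun xy : Fin (L+1) × Fin (L+1) =>
                  comp1 L xy.1 = a.1 ∧ comp2 L xy.2 = a.2),
                ({ω | W m ω = xy.2} ∩ ({ω | W (m-1) ω = xy.1} ∩ B)) := by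
          ext ω
          simp only [Set.mem_inter_iff, Set.mem_setOf_eq, Set.mem_iUnion, Finset.mem_filter,
            Finset.mem_product, Finset.mem_univ, true_and, and_true]
          constructor
          · rintro ⟨hB, hg⟩
            refine ⟨(W (m-1) ω, W m ω), ?_, rfl, rfl, hB⟩
            exact ⟨congrArg Prod.fst hg, congrArg Prod.snd hg⟩
          · rintro ⟨xy, ⟨h1c, h2c⟩, hy, hx, hB⟩
            refine ⟨hB, ?_⟩
            show (comp1 L (W (m-1) ω), comp2 L (W m ω)) = a
            rw [hx, hy]
            exact Prod.ext h1c h2c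
        rw [hdec, measure_biUnion_finset]
        · have e1 : ∀ xy ∈ (Finset.univ ×ˢ Finset.univ).filter
              (fun xy : Fin (L+1) × Fin (L+1) =>
                comp1 L xy.1 = a.1 ∧ comp2 L xy.2 = a.2),
              ℙ ({ω | W m ω = xy.2} ∩ ({ω | W (m-1) ω = xy.1} ∩ B))
                = E1 L lam xy.1 xy.2 * (Ek L lam n v₀ xy.1 * ℙ B) :=
            fun xy _ => step2 xy.1 xy.2
          rw [Finset.sum_congr rfl e1, Finset.sum_filter, Finset.sum_product]
          have e2 : ∀ x y : Fin (L+1),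
              (if comp1 L x = a.1 ∧ comp2 L y = a.2
                then E1 L lam x y * (Ek L lam n v₀ x * ℙ B) else 0)
                = (if comp1 L x = a.1 ∧ comp2 L y = a.2
                    then ENNReal.ofReal (Pk L lam n v₀ x * Pmat L lam x y) else 0) * ℙ B := by
            intro x y
            rw [ite_mul, zero_mul]
            split_ifs with h
            · rw [Ek_eq_ofReal h0 h1, E1, ENNReal.ofReal_mul (Pk_nonneg h0 h1 n v₀ x)]
              ring
            · rfl
          have e3 : ∑ x : Fin (L+1), ∑ y : Fin (L+1),
              (if comp1 L x = a.1 ∧ comp2 L y = a.2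
                then E1 L lam x y * (Ek L lam n v₀ x * ℙ B) else 0)
              = (∑ x : Fin (L+1), ∑ y : Fin (L+1),
                  (if comp1 L x = a.1 ∧ comp2 L y = a.2
                    then ENNReal.ofReal (Pk L lam n v₀ x * Pmat L lam x y) else 0)) * ℙ B := by
            rw [Finset.sum_mul]
            apply Finset.sum_congr rfl
            intro x _
            rw [Finset.sum_mul]
            exact Finset.sum_congr rfl (fun y _ => e2 x y)
          rw [e3]
          congr 1
          unfold condF
          have einner : ∀ x : Fin (L+1),
              ∑ y : Fin (L+1), (if comp1 L x = a.1 ∧ comp2 L y = a.2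
                  then ENNReal.ofReal (Pk L lam n v₀ x * Pmat L lam x y) else 0)
                = ENNReal.ofReal (∑ y : Fin (L+1),
                    if comp1 L x = a.1 ∧ comp2 L y = a.2
                      then Pk L lam n v₀ x * Pmat L lam x y else 0) := by
            intro x
            rw [ENNReal.ofReal_sum_of_nonneg (fun y _ => by
              split_ifs with h
              · exact mul_nonneg (Pk_nonneg h0 h1 _ _ _) (Pmat_nonneg h0 h1 _ _)
              · exact le_refl 0)]
            apply Finset.sum_congr rfl
            intro y _
            split_ifs
            · rfl
            · rw [ENNReal.ofReal_zero]
          rw [Finset.sum_congr rfl (fun x _ => einner x)]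
          exact (ENNReal.ofReal_sum_of_nonneg (fun x _ => Finset.sum_nonneg (fun y _ => by
              split_ifs with h
              · exact mul_nonneg (Pk_nonneg h0 h1 _ _ _) (Pmat_nonneg h0 h1 _ _)
              · exact le_refl 0))).symm
        · intro p hp q hq hpq
          rw [Function.onFun, Set.disjoint_left]
          rintro ω ⟨hy1, hx1, -⟩ ⟨hy2, hx2, -⟩
          apply hpq
          have : p.1 = q.1 := by rw [← hx1, ← hx2]
          have h2 : p.2 = q.2 := by rw [← hy1, ← hy2]
          exact Prod.ext this h2
        · intro xy _
          exact (hWMeas m (measurableSet_singleton _)).inter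
            ((hWMeas (m-1) (measurableSet_singleton _)).inter hBmeas)
      have hval : ∀ a : G L, ((ℙ : Measure Ω)[|B] {ω | gOfW L W m ω = a}).toReal
          = condF L lam n v₀ a := by
        intro a
        rw [ProbabilityTheory.cond_apply hBmeas, step3 a]
        rw [mul_comm (ENNReal.ofReal (condF L lam n v₀ a)) (ℙ B), ← mul_assoc,
          ENNReal.inv_mul_cancel hPB (measure_ne_top _ _), one_mul]
        exact ENNReal.toReal_ofReal (condF_nonneg h0 h1 n v₀ a)
      have hfin : ∑ a : G L, |((ℙ : Measure Ω)[|B] {ω | gOfW L W m ω = a}).toReal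
            - piExplicit L lam a|
          = ∑ a : G L, |condF L lam n v₀ a - piExplicit L lam a| := by
        apply Finset.sum_congr rfl
        intro a _
        rw [hval a]
      rw [hfin]
      have := hCbound n v₀
      have hexp : n + 1 = m - k := by omega
      rw [hexp] at this
      exact this


end MTD1D
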